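/- Let (w_i)_{i=1}^∞ be a non-increasing sequence of non-negative reals. The following are equivalent: (i) there exists a constant C < ∞ such that ∑_{i=1}^∞ a_i w_i ≤ C · sup_{n∈ℕ} ∑_{i=1}^n a_i w_{1+n-i} for every non-increasing sequence (a_i)_{i=1}^∞ of non-negative reals; (ii) either ∑_{i=1}^∞ w_i < ∞ or inf_{i∈ℕ} w_i > 0. -/

import Mathlib

open scoped NNReal ENNReal

open Finset in
private lemma geo_le (L : ℕ) : ∑ j ∈ Finset.range L, ((2:ℝ≥0∞))⁻¹ ^ j ≤ 2 := by
  calc ∑ j ∈ Finset.range L, ((2:ℝ≥0∞))⁻¹ ^ j ≤ ∑' j : ℕ, ((2:ℝ≥0∞))⁻¹ ^ j :=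
        ENNReal.sum_le_tsum _
    _ = 2 := by rw [ENNReal.tsum_geometric, ENNReal.one_sub_inv_two, inv_inv]

lemma hard (w : ℕ → ℝ≥0) (hw : Antitone w)
    (htop : ∑' i : ℕ, (w i : ℝ≥0∞) = ⊤) (hinf : ⨅ i, w i = 0) (C : ℝ≥0) :
    ∃ a : ℕ → ℝ≥0, Antitone a ∧
      ¬ (∑' i : ℕ, ((a i * w i : ℝ≥0) : ℝ≥0∞)
        ≤ (C : ℝ≥0∞) * ⨆ n : ℕ, ∑ i ∈ Finset.range n, ((a i * w (n - 1 - i) : ℝ≥0) : ℝ≥0∞)) := by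
  classical
  set W : ℕ → ℝ≥0 := fun n => ∑ j ∈ Finset.range n, w j with hWdef
  have hWmono : Monotone W := fun n n' h =>
    Finset.sum_le_sum_of_subset (Finset.range_subset_range.2 h)
  -- partial sums are unbounded
  have hWbig : ∀ M : ℝ≥0, ∃ n, M < W n := by
    intro M
    by_contra hcon
    push_neg at hcon
    apply absurd htop
    have hle : ∑' i : ℕ, (w i : ℝ≥0∞) ≤ (M : ℝ≥0∞) := by
      rw [ENNReal.tsum_eq_iSup_sum' _ Finset.exists_nat_subset_range]
      refine iSup_le fun n => ?_
      rw [← ENNReal.coe_finset_sum]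
      exact_mod_cast hcon n
    exact ne_top_of_le_ne_top ENNReal.coe_ne_top hle
  have hwsmall : ∀ ε : ℝ≥0, 0 < ε → ∃ j, w j < ε := fun ε hε =>
    exists_lt_of_ciInf_lt (hinf ▸ hε)
  -- the recursive construction of block endpoints
  have step : ∀ (k q : ℕ), 0 < W q → ∃ q' : ℕ, q < q' ∧ 0 < W q' ∧ 2 * W q ≤ W q' ∧
      (q : ℝ≥0) * w (q' - q) ≤ (2:ℝ≥0)⁻¹ ^ (k+1) * W q := by
    intro k q hq
    have hq0 : (q : ℝ≥0) ≠ 0 := by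
      rcases Nat.eq_zero_or_pos q with h | h
      · subst h; simp [hWdef] at hq
      · exact_mod_cast h.ne'
    obtain ⟨P, hP⟩ := hWbig (2 * W q)
    obtain ⟨M, hM⟩ := hwsmall ((2:ℝ≥0)⁻¹ ^ (k+1) * W q / q) (by positivity)
    refine ⟨max P (q + M + 1), ?_, ?_, ?_, ?_⟩
    · have : q + M + 1 ≤ max P (q + M + 1) := le_max_right _ _
      omega
    · exact lt_of_lt_of_le (lt_of_lt_of_le hq (by
        calc W q = 1 * W q := (one_mul _).symm
          _ ≤ 2 * W q := mul_le_mul_left (by norm_num) _))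
        (le_of_lt (lt_of_lt_of_le hP (hWmono (le_max_left _ _))))
    · exact le_trans hP.le (hWmono (le_max_left _ _))
    · have h1 : M ≤ max P (q + M + 1) - q := by
        have : q + M + 1 ≤ max P (q + M + 1) := le_max_right _ _
        omega
      have h2 : w (max P (q + M + 1) - q) ≤ w M := hw h1
      calc (q : ℝ≥0) * w (max P (q + M + 1) - q) ≤ (q : ℝ≥0) * w M := mul_le_mul_right h2 _
        _ ≤ (q : ℝ≥0) * ((2:ℝ≥0)⁻¹ ^ (k+1) * W q / q) := mul_le_mul_right hM.le _
        _ = (2:ℝ≥0)⁻¹ ^ (k+1) * W q := by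
            rw [mul_comm, div_mul_cancel₀ _ hq0]
  obtain ⟨q0, hq0⟩ := hWbig 0
  obtain ⟨N, hN0, hNs⟩ : ∃ N : ℕ → ℕ, 0 < W (N 0) ∧ ∀ k, N k < N (k+1) ∧
      2 * W (N k) ≤ W (N (k+1)) ∧
      (N k : ℝ≥0) * w (N (k+1) - N k) ≤ (2:ℝ≥0)⁻¹ ^ (k+1) * W (N k) := by
    let Q : ℕ → {q : ℕ // 0 < W q} := fun k =>
      Nat.rec ⟨q0, hq0⟩ (fun k ih => ⟨(step k ih.1 ih.2).choose,
        ((step k ih.1 ih.2).choose_spec).2.1⟩) k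
    refine ⟨fun k => (Q k).1, (Q 0).2, fun k => ?_⟩
    have h := (step k (Q k).1 (Q k).2).choose_spec
    exact ⟨h.1, h.2.2.1, h.2.2.2⟩
  have hNmono : StrictMono N := strictMono_nat_of_lt_succ fun k => (hNs k).1
  have hWpos : ∀ k, 0 < W (N k) :=
    fun k => lt_of_lt_of_le hN0 (hWmono (hNmono.monotone (Nat.zero_le k)))
  have hgrow : ∀ j k, 2 ^ j * W (N k) ≤ W (N (k + j)) := by
    intro j
    induction j with
    | zero => intro k; simp
    | succ j ih =>
        intro k
        calc 2 ^ (j+1) * W (N k) = 2 * (2 ^ j * W (N k)) := by ring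
          _ ≤ 2 * W (N (k + j)) := mul_le_mul_right (ih k) _
          _ ≤ W (N (k + j + 1)) := (hNs (k+j)).2.1
  obtain ⟨m, hm⟩ := exists_nat_gt (4 * C)
  set a : ℕ → ℝ≥0 := fun i => ∑ k ∈ Finset.range m, if i < N k then (W (N k))⁻¹ else 0
    with hadef
  have ha : Antitone a := by
    intro i j hij
    refine Finset.sum_le_sum fun k _ => ?_
    by_cases hj : j < N k
    · simp [hj, lt_of_le_of_lt hij hj]
    · simp [hj]
  refine ⟨a, ha, ?_⟩
  -- LHS equals m
  have hLHS : ∑' i : ℕ, ((a i * w i : ℝ≥0) : ℝ≥0∞) = (m : ℝ≥0∞) := by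
    have hterm : ∀ i, ((a i * w i : ℝ≥0) : ℝ≥0∞)
        = ∑ k ∈ Finset.range m, (if i < N k then ((W (N k))⁻¹ : ℝ≥0∞) * (w i : ℝ≥0∞) else 0) := by
      intro i
      rw [ENNReal.coe_mul, hadef]
      push_cast
      rw [Finset.sum_mul]
      refine Finset.sum_congr rfl fun k _ => ?_
      split_ifs <;> simp [ENNReal.coe_inv (hWpos _).ne']
    rw [tsum_congr hterm, Summable.tsum_finsetSum (fun k _ => ENNReal.summable)]
    have hk : ∀ k ∈ Finset.range m,
        (∑' i : ℕ, (if i < N k then ((W (N k))⁻¹ : ℝ≥0∞) * (w i : ℝ≥0∞) else 0)) = 1 := by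
      intro k _
      rw [tsum_eq_sum (s := Finset.range (N k)) (by
        intro i hi
        rw [Finset.mem_range] at hi
        simp [hi])]
      rw [Finset.sum_congr rfl (fun i hi => if_pos (Finset.mem_range.1 hi))]
      rw [← Finset.mul_sum, ← ENNReal.coe_finset_sum, ← ENNReal.coe_inv (hWpos k).ne',
        ← ENNReal.coe_mul, inv_mul_cancel₀ (hWpos k).ne', ENNReal.coe_one]
    rw [Finset.sum_congr rfl hk, Finset.sum_const, Finset.card_range, nsmul_eq_mul, mul_one]
  -- RHS partial sums are at most 4
  have hV1 : ∀ n L, L ≤ n → ∑ i ∈ Finset.range L, (w (n - 1 - i) : ℝ≥0∞) ≤ (W L : ℝ≥0∞) := by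
    intro n L hL
    calc ∑ i ∈ Finset.range L, (w (n - 1 - i) : ℝ≥0∞)
        ≤ ∑ i ∈ Finset.range L, (w (L - 1 - i) : ℝ≥0∞) := by
          refine Finset.sum_le_sum fun i hi => ?_
          rw [Finset.mem_range] at hi
          exact_mod_cast hw (by omega)
      _ = ∑ i ∈ Finset.range L, (w i : ℝ≥0∞) :=
          Finset.sum_range_reflect (fun j => (w j : ℝ≥0∞)) L
      _ = (W L : ℝ≥0∞) := by rw [hWdef]; push_cast; ring
  have hS : ∀ n, ∑ i ∈ Finset.range n, ((a i * w (n - 1 - i) : ℝ≥0) : ℝ≥0∞) ≤ 4 := by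
    intro n
    have hex : ∃ k, n < N k := ⟨n + 1, lt_of_lt_of_le (Nat.lt_succ_self n) (hNmono.le_apply)⟩
    set K := Nat.find hex with hKdef
    have hK1 : n < N K := Nat.find_spec hex
    have hK2 : ∀ k, k < K → N k ≤ n := fun k hk => not_lt.1 (Nat.find_min hex hk)
    have hswap : ∑ i ∈ Finset.range n, ((a i * w (n - 1 - i) : ℝ≥0) : ℝ≥0∞)
        = ∑ k ∈ Finset.range m, ((W (N k))⁻¹ : ℝ≥0∞) *
            ∑ i ∈ Finset.range (min n (N k)), (w (n - 1 - i) : ℝ≥0∞) := by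
      have h1 : ∀ i, ((a i * w (n - 1 - i) : ℝ≥0) : ℝ≥0∞)
          = ∑ k ∈ Finset.range m,
              (if i < N k then ((W (N k))⁻¹ : ℝ≥0∞) * (w (n - 1 - i) : ℝ≥0∞) else 0) := by
        intro i
        rw [ENNReal.coe_mul, hadef]
        push_cast
        rw [Finset.sum_mul]
        refine Finset.sum_congr rfl fun k _ => ?_
        split_ifs <;> simp [ENNReal.coe_inv (hWpos _).ne']
      rw [Finset.sum_congr rfl fun i _ => h1 i, Finset.sum_comm]
      refine Finset.sum_congr rfl fun k _ => ?_
      rw [Finset.mul_sum]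
      rw [← Finset.sum_subset (Finset.range_subset_range.2 (min_le_left n (N k)))
        (by
          intro i hi hni
          rw [Finset.mem_range] at hi
          rw [Finset.mem_range, not_lt] at hni
          have : ¬ i < N k := by omega
          simp [this])]
      refine Finset.sum_congr rfl fun i hi => ?_
      rw [Finset.mem_range] at hi
      rw [if_pos (by omega)]
    rw [hswap]
    have per_k : ∀ k ∈ Finset.range m, ((W (N k))⁻¹ : ℝ≥0∞) *
        ∑ i ∈ Finset.range (min n (N k)), (w (n - 1 - i) : ℝ≥0∞)
        ≤ (2:ℝ≥0∞)⁻¹ ^ (k+1) + (if k + 1 = K then 1 else 0)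
          + (if K ≤ k then (2:ℝ≥0∞)⁻¹ ^ (k - K) else 0) := by
      intro k _
      rcases lt_trichotomy (k+1) K with hc | hc | hc
      · -- N (k+1) ≤ n : use the smallness of w
        have hkn : N (k+1) ≤ n := hK2 _ hc
        have hkk : N k < N (k+1) := (hNs k).1
        have hbound : ∑ i ∈ Finset.range (min n (N k)), (w (n - 1 - i) : ℝ≥0∞)
            ≤ ((N k : ℝ≥0) * w (N (k+1) - N k) : ℝ≥0∞) := by
          calc ∑ i ∈ Finset.range (min n (N k)), (w (n - 1 - i) : ℝ≥0∞)
              ≤ ∑ i ∈ Finset.range (min n (N k)), (w (N (k+1) - N k) : ℝ≥0∞) := by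
                refine Finset.sum_le_sum fun i hi => ?_
                rw [Finset.mem_range] at hi
                exact_mod_cast hw (by omega)
            _ = (min n (N k) : ℕ) • (w (N (k+1) - N k) : ℝ≥0∞) := by
                rw [Finset.sum_const, Finset.card_range]
            _ ≤ (N k : ℕ) • (w (N (k+1) - N k) : ℝ≥0∞) :=
                nsmul_le_nsmul_left zero_le (min_le_right _ _)
            _ = ((N k : ℝ≥0) * w (N (k+1) - N k) : ℝ≥0∞) := by
                rw [nsmul_eq_mul]; push_cast; ring
        calc ((W (N k))⁻¹ : ℝ≥0∞) * ∑ i ∈ Finset.range (min n (N k)), (w (n - 1 - i) : ℝ≥0∞)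
            ≤ ((W (N k))⁻¹ : ℝ≥0∞) * ((N k : ℝ≥0) * w (N (k+1) - N k) : ℝ≥0∞) :=
              mul_le_mul_right hbound _
          _ ≤ ((W (N k))⁻¹ : ℝ≥0∞) * (((2:ℝ≥0)⁻¹ ^ (k+1) * W (N k) : ℝ≥0) : ℝ≥0∞) := by
              exact mul_le_mul_right (by exact_mod_cast (hNs k).2.2) _
          _ = (((W (N k))⁻¹ * ((2:ℝ≥0)⁻¹ ^ (k+1) * W (N k)) : ℝ≥0) : ℝ≥0∞) := by
              rw [← ENNReal.coe_inv (hWpos k).ne', ← ENNReal.coe_mul]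
          _ = (((2:ℝ≥0)⁻¹ ^ (k+1) : ℝ≥0) : ℝ≥0∞) := by
              congr 1
              rw [mul_comm ((2:ℝ≥0)⁻¹ ^ (k+1)), ← mul_assoc,
                inv_mul_cancel₀ (hWpos k).ne', one_mul]
          _ = (2:ℝ≥0∞)⁻¹ ^ (k+1) := by push_cast; ring
          _ ≤ _ := le_add_of_le_of_nonneg (le_add_of_le_of_nonneg le_rfl zero_le) zero_le
      · -- k + 1 = K : the main block, contributes at most 1
        have hkn : N k ≤ n := hK2 k (by omega)
        have hmin : min n (N k) = N k := min_eq_right hkn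
        have hb : ((W (N k))⁻¹ : ℝ≥0∞) *
            ∑ i ∈ Finset.range (min n (N k)), (w (n - 1 - i) : ℝ≥0∞) ≤ 1 := by
          calc ((W (N k))⁻¹ : ℝ≥0∞) * ∑ i ∈ Finset.range (min n (N k)), (w (n - 1 - i) : ℝ≥0∞)
              ≤ ((W (N k))⁻¹ : ℝ≥0∞) * (W (N k) : ℝ≥0∞) := by
                refine mul_le_mul_right ?_ _
                rw [hmin]
                exact hV1 n (N k) hkn
            _ = 1 := by
                rw [← ENNReal.coe_inv (hWpos k).ne', ← ENNReal.coe_mul,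
                  inv_mul_cancel₀ (hWpos k).ne', ENNReal.coe_one]
        refine le_trans hb ?_
        rw [if_pos hc]
        exact le_add_of_le_of_nonneg (le_add_of_nonneg_of_le zero_le le_rfl) zero_le
      · -- K ≤ k : geometric decay
        have hKk : K ≤ k := by omega
        have hnN : n ≤ N K := hK1.le
        have hmin : min n (N k) = n := min_eq_left (le_trans hnN (hNmono.monotone hKk))
        have hWn : W n ≤ W (N K) := hWmono hnN
        have hgeo : W (N K) ≤ (2:ℝ≥0)⁻¹ ^ (k - K) * W (N k) := by
          have h2 := hgrow (k - K) K
          rw [Nat.add_sub_cancel' hKk] at h2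
          calc W (N K) = (2:ℝ≥0)⁻¹ ^ (k - K) * (2 ^ (k - K) * W (N K)) := by
                rw [← mul_assoc, ← mul_pow, inv_mul_cancel₀ (two_ne_zero), one_pow, one_mul]
            _ ≤ (2:ℝ≥0)⁻¹ ^ (k - K) * W (N k) := mul_le_mul_right h2 _
        have hb : ((W (N k))⁻¹ : ℝ≥0∞) *
            ∑ i ∈ Finset.range (min n (N k)), (w (n - 1 - i) : ℝ≥0∞)
            ≤ (2:ℝ≥0∞)⁻¹ ^ (k - K) := by
          calc ((W (N k))⁻¹ : ℝ≥0∞) * ∑ i ∈ Finset.range (min n (N k)), (w (n - 1 - i) : ℝ≥0∞)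
              ≤ ((W (N k))⁻¹ : ℝ≥0∞) * (W (N K) : ℝ≥0∞) := by
                refine mul_le_mul_right ?_ _
                rw [hmin]
                exact le_trans (hV1 n n le_rfl) (by exact_mod_cast hWn)
            _ ≤ ((W (N k))⁻¹ : ℝ≥0∞) * (((2:ℝ≥0)⁻¹ ^ (k - K) * W (N k) : ℝ≥0) : ℝ≥0∞) :=
                mul_le_mul_right (by exact_mod_cast hgeo) _
            _ = (((W (N k))⁻¹ * ((2:ℝ≥0)⁻¹ ^ (k - K) * W (N k)) : ℝ≥0) : ℝ≥0∞) := by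
                rw [← ENNReal.coe_inv (hWpos k).ne', ← ENNReal.coe_mul]
            _ = (((2:ℝ≥0)⁻¹ ^ (k - K) : ℝ≥0) : ℝ≥0∞) := by
                congr 1
                rw [mul_comm ((2:ℝ≥0)⁻¹ ^ (k - K)), ← mul_assoc,
                  inv_mul_cancel₀ (hWpos k).ne', one_mul]
            _ = (2:ℝ≥0∞)⁻¹ ^ (k - K) := by push_cast; ring
        refine le_trans hb ?_
        rw [if_pos hKk]
        exact le_add_of_nonneg_of_le zero_le le_rfl
    calc ∑ k ∈ Finset.range m, ((W (N k))⁻¹ : ℝ≥0∞) *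
          ∑ i ∈ Finset.range (min n (N k)), (w (n - 1 - i) : ℝ≥0∞)
        ≤ ∑ k ∈ Finset.range m, ((2:ℝ≥0∞)⁻¹ ^ (k+1) + (if k + 1 = K then 1 else 0)
            + (if K ≤ k then (2:ℝ≥0∞)⁻¹ ^ (k - K) else 0)) := Finset.sum_le_sum per_k
      _ = (∑ k ∈ Finset.range m, (2:ℝ≥0∞)⁻¹ ^ (k+1))
          + (∑ k ∈ Finset.range m, if k + 1 = K then (1:ℝ≥0∞) else 0)
          + (∑ k ∈ Finset.range m, if K ≤ k then (2:ℝ≥0∞)⁻¹ ^ (k - K) else 0) := by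
          rw [Finset.sum_add_distrib, Finset.sum_add_distrib]
      _ ≤ 1 + 1 + 2 := by
          gcongr
          · -- geometric, shifted by one
            calc ∑ k ∈ Finset.range m, (2:ℝ≥0∞)⁻¹ ^ (k+1)
                = (∑ k ∈ Finset.range m, (2:ℝ≥0∞)⁻¹ ^ k) * 2⁻¹ := by
                  rw [Finset.sum_mul]
                  exact Finset.sum_congr rfl fun k _ => (pow_succ _ _)
              _ ≤ 2 * 2⁻¹ := mul_le_mul_left (geo_le m) _
              _ = 1 := ENNReal.mul_inv_cancel two_ne_zero ENNReal.ofNat_ne_top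
          · -- at most one nonzero term
            cases K with
            | zero => simp
            | succ K' =>
                have : ∀ k ∈ Finset.range m, (if k + 1 = K' + 1 then (1:ℝ≥0∞) else 0)
                    = (if k = K' then (1:ℝ≥0∞) else 0) := by
                  intro k _
                  simp [Nat.succ_inj]
                rw [Finset.sum_congr rfl this, Finset.sum_ite_eq' (Finset.range m) K']
                split_ifs <;> norm_num
          · -- geometric tail
            calc ∑ k ∈ Finset.range m, (if K ≤ k then (2:ℝ≥0∞)⁻¹ ^ (k - K) else 0)
                ≤ ∑ k ∈ Finset.range (K + m), (if K ≤ k then (2:ℝ≥0∞)⁻¹ ^ (k - K) else 0) :=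
                  Finset.sum_le_sum_of_subset (Finset.range_subset_range.2 (by omega))
              _ = ∑ k ∈ Finset.Ico K (K + m), (if K ≤ k then (2:ℝ≥0∞)⁻¹ ^ (k - K) else 0) := by
                  rw [Finset.range_eq_Ico,
                    ← Finset.sum_Ico_consecutive _ (Nat.zero_le K) (Nat.le_add_right K m)]
                  have hzero : ∑ k ∈ Finset.Ico 0 K,
                      (if K ≤ k then (2:ℝ≥0∞)⁻¹ ^ (k - K) else 0) = 0 := by
                    refine Finset.sum_eq_zero fun k hk => ?_
                    rw [Finset.mem_Ico] at hk
                    rw [if_neg (by omega)]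
                  rw [hzero, zero_add]
              _ = ∑ j ∈ Finset.range m, (2:ℝ≥0∞)⁻¹ ^ j := by
                  rw [Finset.sum_Ico_eq_sum_range]
                  have hmm : K + m - K = m := by omega
                  rw [hmm]
                  refine Finset.sum_congr rfl fun j _ => ?_
                  rw [if_pos (Nat.le_add_right K j)]
                  congr 1
                  omega
              _ ≤ 2 := geo_le m
      _ = 4 := by norm_num
  -- conclude
  rw [hLHS, not_le]
  calc (C : ℝ≥0∞) * ⨆ n : ℕ, ∑ i ∈ Finset.range n, ((a i * w (n - 1 - i) : ℝ≥0) : ℝ≥0∞)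
      ≤ (C : ℝ≥0∞) * 4 := mul_le_mul_right (iSup_le hS) _
    _ = ((4 * C : ℝ≥0) : ℝ≥0∞) := by push_cast; ring
    _ < ((m : ℝ≥0) : ℝ≥0∞) := ENNReal.coe_lt_coe.2 hm
    _ = (m : ℝ≥0∞) := by push_cast; ring

open Finset in
private lemma easy (w : ℕ → ℝ≥0) (hw : Antitone w)
    (h : ∑' i : ℕ, (w i : ℝ≥0∞) ≠ ⊤ ∨ 0 < ⨅ i, w i) :
    (∃ C : ℝ≥0, ∀ a : ℕ → ℝ≥0, Antitone a →
      ∑' i : ℕ, ((a i * w i : ℝ≥0) : ℝ≥0∞)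
        ≤ (C : ℝ≥0∞) * ⨆ n : ℕ, ∑ i ∈ Finset.range n, ((a i * w (n - 1 - i) : ℝ≥0) : ℝ≥0∞)) := by
  rcases h with hfin | hpos
  · by_cases h0 : w 0 = 0
    · refine ⟨0, fun a ha => ?_⟩
      have : ∀ i, w i = 0 := fun i => le_antisymm (h0 ▸ hw (Nat.zero_le i)) zero_le
      simp [this]
    · set T := ∑' i : ℕ, (w i : ℝ≥0∞) with hT
      refine ⟨T.toNNReal / w 0, fun a ha => ?_⟩
      have h1 : ∑' i : ℕ, ((a i * w i : ℝ≥0) : ℝ≥0∞) ≤ (a 0 : ℝ≥0∞) * T := by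
        rw [hT, ← ENNReal.tsum_mul_left]
        refine ENNReal.tsum_le_tsum fun i => ?_
        push_cast
        exact mul_le_mul_left (ENNReal.coe_le_coe.2 (ha (Nat.zero_le i))) _
      have h2 : ((a 0 * w 0 : ℝ≥0) : ℝ≥0∞)
          ≤ ⨆ n : ℕ, ∑ i ∈ Finset.range n, ((a i * w (n - 1 - i) : ℝ≥0) : ℝ≥0∞) := by
        refine le_trans ?_ (le_iSup _ 1)
        simp
      refine h1.trans ?_
      calc (a 0 : ℝ≥0∞) * T = ((T.toNNReal / w 0 : ℝ≥0) : ℝ≥0∞) * ((a 0 * w 0 : ℝ≥0) : ℝ≥0∞) := by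
            rw [← ENNReal.coe_mul, ← ENNReal.coe_toNNReal hfin, ← ENNReal.coe_mul]
            congr 1
            rw [ENNReal.toNNReal_coe]
            field_simp
        _ ≤ _ := mul_le_mul_right h2 _
  · set c := ⨅ i, w i with hc
    have hc0 : c ≠ 0 := hpos.ne'
    refine ⟨w 0 / c, fun a ha => ?_⟩
    have h1 : ∑' i : ℕ, ((a i * w i : ℝ≥0) : ℝ≥0∞) ≤ (w 0 : ℝ≥0∞) * ∑' i, (a i : ℝ≥0∞) := by
      rw [← ENNReal.tsum_mul_left]
      refine ENNReal.tsum_le_tsum fun i => ?_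
      push_cast
      rw [mul_comm]
      exact mul_le_mul_left (ENNReal.coe_le_coe.2 (hw (Nat.zero_le i))) _
    have h2 : (c : ℝ≥0∞) * ∑' i, (a i : ℝ≥0∞)
        ≤ ⨆ n : ℕ, ∑ i ∈ Finset.range n, ((a i * w (n - 1 - i) : ℝ≥0) : ℝ≥0∞) := by
      rw [ENNReal.tsum_eq_iSup_sum' _ Finset.exists_nat_subset_range, ENNReal.mul_iSup]
      refine iSup_le fun n => le_trans ?_ (le_iSup _ n)
      rw [Finset.mul_sum]
      refine Finset.sum_le_sum fun i _ => ?_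
      push_cast
      rw [mul_comm]
      exact mul_le_mul_right (ENNReal.coe_le_coe.2 (ciInf_le (OrderBot.bddBelow _) _)) _
    calc ∑' i : ℕ, ((a i * w i : ℝ≥0) : ℝ≥0∞) ≤ (w 0 : ℝ≥0∞) * ∑' i, (a i : ℝ≥0∞) := h1
      _ = ((w 0 / c : ℝ≥0) : ℝ≥0∞) * ((c:ℝ≥0∞) * ∑' i, (a i : ℝ≥0∞)) := by
          rw [← mul_assoc, ← ENNReal.coe_mul, div_mul_cancel₀ _ hc0]
      _ ≤ _ := mul_le_mul_right h2 _

/-- Main Theorem: for a non-increasing sequence `(w_i)` of non-negative reals,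
there exists `C < ∞` with `∑ a_i w_i ≤ C · sup_n ∑_{i=1}^n a_i w_{1+n-i}` for all
non-increasing non-negative `(a_i)` iff `∑ w_i < ∞` or `inf_i w_i > 0`. -/
theorem stmt_5 (w : ℕ → ℝ≥0) (hw : Antitone w) :
    (∃ C : ℝ≥0, ∀ a : ℕ → ℝ≥0, Antitone a →
      ∑' i : ℕ, ((a i * w i : ℝ≥0) : ℝ≥0∞)
        ≤ (C : ℝ≥0∞) * ⨆ n : ℕ, ∑ i ∈ Finset.range n, ((a i * w (n - 1 - i) : ℝ≥0) : ℝ≥0∞))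
    ↔ (∑' i : ℕ, (w i : ℝ≥0∞) ≠ ⊤ ∨ 0 < ⨅ i, w i) := by
  constructor
  · intro h
    by_contra hcon
    push_neg at hcon
    obtain ⟨C, hC⟩ := h
    obtain ⟨a, ha, hna⟩ := hard w hw hcon.1
      (le_antisymm hcon.2 zero_le) C
    exact hna (hC a ha)
  · exact easy w hw
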